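/- For all real n > 0 and a with 1 ≤ a ≤ n/e, letting I_a = a·log(n/a), the sum Σ_{i=1}^{⌊I_a⌋} n/(a·e^{i/a} + n)^2 satisfies c·(a/n)·log(n/a) ≤ Σ_{i=1}^{⌊I_a⌋} n/(a·e^{i/a} + n)^2 and Σ_{i=1}^{∞} n/(a·e^{i/a} + n)^2 ≤ C·(a/n)·log(n/a), for universal constants 0 < c ≤ C. -/

import Mathlib

set_option maxHeartbeats 1000000


/-- For `1 ≤ a ≤ n/e` and `I_a = a·log(n/a)`:
`c·(a/n)·log(n/a) ≤ Σ_{i=1}^{⌊I_a⌋} n/(a e^{i/a}+n)²` and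
`Σ_{i=1}^{∞} n/(a e^{i/a}+n)² ≤ C·(a/n)·log(n/a)` for universal constants `0 < c ≤ C`. -/
theorem stmt6 :
    ∃ c C : ℝ, 0 < c ∧ c ≤ C ∧ ∀ n a : ℝ, 1 ≤ a → a ≤ n / Real.exp 1 →
      (c * (a / n) * Real.log (n / a) ≤
        ∑ i ∈ Finset.Icc 1 ⌊a * Real.log (n / a)⌋₊,
          n / (a * Real.exp ((i : ℝ) / a) + n) ^ 2) ∧
      (∑' i : ℕ, n / (a * Real.exp (((i : ℝ) + 1) / a) + n) ^ 2 ≤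
        C * (a / n) * Real.log (n / a)) := by
  refine ⟨1/8, 1 + Real.exp 2, by norm_num, by nlinarith [Real.exp_pos 2], ?_⟩
  intro n a ha han
  have ha0 : (0:ℝ) < a := lt_of_lt_of_le one_pos ha
  have he : (0:ℝ) < Real.exp 1 := Real.exp_pos 1
  have hea : Real.exp 1 * a ≤ n := by
    rw [le_div_iff₀ he] at han; linarith
  have hn : 0 < n := lt_of_lt_of_le (by positivity) hea
  have hna0 : 0 < n / a := by positivity
  have hna : Real.exp 1 ≤ n / a := by
    rw [le_div_iff₀ ha0]; linarith
  set L := Real.log (n / a) with hL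
  have hlog : 1 ≤ L := by
    calc (1:ℝ) = Real.log (Real.exp 1) := (Real.log_exp 1).symm
    _ ≤ L := Real.log_le_log (Real.exp_pos 1) hna
  have hexpL : Real.exp L = n / a := Real.exp_log hna0
  have haL1 : (1:ℝ) ≤ a * L := by nlinarith
  have haL0 : (0:ℝ) ≤ a * L := by linarith
  set N := ⌊a * L⌋₊ with hN
  have hN1 : 1 ≤ N := Nat.le_floor (by exact_mod_cast haL1)
  have hNle : (N:ℝ) ≤ a * L := Nat.floor_le haL0
  have hNup : a * L < N + 1 := Nat.lt_floor_add_one _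
  have hN2 : a * L ≤ 2 * N := by
    have : (1:ℝ) ≤ N := by exact_mod_cast hN1
    linarith
  constructor
  · -- lower bound
    have hterm : ∀ i ∈ Finset.Icc 1 N, 1/(4*n) ≤ n / (a * Real.exp ((i : ℝ) / a) + n) ^ 2 := by
      intro i hi
      rw [Finset.mem_Icc] at hi
      have hiN : (i:ℝ) ≤ N := by exact_mod_cast hi.2
      have h1 : (i:ℝ) / a ≤ L := by
        rw [div_le_iff₀ ha0]; nlinarith
      have h2 : Real.exp ((i:ℝ)/a) ≤ n / a := by
        rw [← hexpL]; exact Real.exp_le_exp.2 h1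
      have h3 : a * Real.exp ((i:ℝ)/a) ≤ n := by
        calc a * Real.exp ((i:ℝ)/a) ≤ a * (n/a) :=
              mul_le_mul_of_nonneg_left h2 ha0.le
        _ = n := mul_div_cancel₀ n (ne_of_gt ha0)
      have h4 : (0:ℝ) < a * Real.exp ((i:ℝ)/a) + n := by positivity
      have h5 : (a * Real.exp ((i:ℝ)/a) + n)^2 ≤ 4 * n^2 := by nlinarith [Real.exp_pos ((i:ℝ)/a), mul_pos ha0 (Real.exp_pos ((i:ℝ)/a))]
      rw [div_le_div_iff₀ (by positivity) (by positivity)]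
      nlinarith
    calc 1/8 * (a/n) * L = (a*L)/(8*n) := by ring
    _ ≤ (2*(N:ℝ))/(8*n) := by gcongr
    _ = (N:ℝ) * (1/(4*n)) := by ring
    _ = ∑ _i ∈ Finset.Icc 1 N, (1/(4*n)) := by
          rw [Finset.sum_const, Nat.card_Icc]
          simp
    _ ≤ _ := Finset.sum_le_sum hterm
  · -- upper bound
    set f : ℕ → ℝ := fun i => n / (a * Real.exp (((i : ℝ) + 1) / a) + n) ^ 2 with hf
    set r : ℝ := Real.exp (-(2/a)) with hrdef
    have hr0 : 0 ≤ r := (Real.exp_pos _).le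
    have hrpos : 0 < r := Real.exp_pos _
    have hr1 : r < 1 := by
      rw [hrdef, Real.exp_lt_one_iff]
      have : 0 < 2/a := by positivity
      linarith
    have hf0 : ∀ i, 0 ≤ f i := by
      intro i
      have := Real.exp_pos (((i:ℝ)+1)/a)
      positivity
    -- geometric comparison for summability
    have hfb : ∀ i : ℕ, f i ≤ (n / a^2) * r ^ i := by
      intro i
      have hE : 0 < Real.exp (((i:ℝ)+1)/a) := Real.exp_pos _
      have h1 : f i ≤ n / (a * Real.exp (((i:ℝ)+1)/a))^2 := by
        apply div_le_div_of_nonneg_left hn.le (by positivity)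
        nlinarith [mul_pos ha0 hE]
      have e3 : r^(i+1) * (Real.exp (((i:ℝ)+1)/a))^2 = 1 := by
        rw [hrdef, ← Real.exp_nat_mul, sq, ← Real.exp_add, ← Real.exp_add,
          ← Real.exp_zero]
        congr 1
        push_cast
        field_simp
        rw [Real.exp_zero]
        ring
      have e4 : r^(i+1) = ((Real.exp (((i:ℝ)+1)/a))^2)⁻¹ :=
        eq_inv_of_mul_eq_one_left e3
      have e2 : n / (a * Real.exp (((i:ℝ)+1)/a))^2 = (n / a^2) * r ^ (i+1) := by
        rw [e4, mul_pow]
        field_simp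
      calc f i ≤ n / (a * Real.exp (((i:ℝ)+1)/a))^2 := h1
      _ = (n / a^2) * r ^ (i+1) := e2
      _ ≤ (n / a^2) * r ^ i := by
          apply mul_le_mul_of_nonneg_left _ (by positivity)
          exact pow_le_pow_of_le_one hr0 hr1.le (Nat.le_succ i)
    have hgs : Summable (fun i : ℕ => (n / a^2) * r ^ i) :=
      (summable_geometric_of_lt_one hr0 hr1).mul_left _
    have hfs : Summable f := Summable.of_nonneg_of_le hf0 hfb hgs
    have hsplit : ∑ i ∈ Finset.range N, f i + ∑' i, f (i + N) = ∑' i, f i :=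
      hfs.sum_add_tsum_nat_add N
    -- head bound
    have hhead : ∑ i ∈ Finset.range N, f i ≤ (a/n) * L := by
      have h1 : ∀ i ∈ Finset.range N, f i ≤ 1/n := by
        intro i _
        have hE : 0 < a * Real.exp (((i:ℝ)+1)/a) := by positivity
        rw [hf]
        simp only
        rw [div_le_div_iff₀ (by positivity) hn]
        nlinarith
      calc ∑ i ∈ Finset.range N, f i ≤ ∑ _i ∈ Finset.range N, (1/n) :=
            Finset.sum_le_sum h1
      _ = (N:ℝ) * (1/n) := by rw [Finset.sum_const, Finset.card_range]; simp
      _ ≤ (a*L) * (1/n) := by gcongr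
      _ = (a/n) * L := by ring
    -- tail bound
    have htailterm : ∀ i : ℕ, f (i + N) ≤ (1/n) * r ^ i := by
      intro i
      have hE : 0 < Real.exp ((i:ℝ)/a) := Real.exp_pos _
      have hL2 : L ≤ ((N:ℝ)+1)/a := by
        rw [le_div_iff₀ ha0]
        nlinarith
      have hbig : n ≤ a * Real.exp (((N:ℝ)+1)/a) := by
        have h2 : n/a ≤ Real.exp (((N:ℝ)+1)/a) := by
          rw [← hexpL]; exact Real.exp_le_exp.2 hL2
        calc n = a * (n/a) := by field_simp
        _ ≤ a * Real.exp (((N:ℝ)+1)/a) := by gcongr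
      have hsplitexp : Real.exp (((↑(i+N):ℝ)+1)/a)
          = Real.exp (((N:ℝ)+1)/a) * Real.exp ((i:ℝ)/a) := by
        rw [← Real.exp_add]
        congr 1
        push_cast
        field_simp
        ring
      have hge : n * Real.exp ((i:ℝ)/a) ≤ a * Real.exp (((↑(i+N):ℝ)+1)/a) := by
        rw [hsplitexp, ← mul_assoc]
        exact mul_le_mul_of_nonneg_right hbig hE.le
      have h1 : f (i+N) ≤ n / (n * Real.exp ((i:ℝ)/a))^2 := by
        have hEp : 0 < Real.exp (((↑(i+N):ℝ)+1)/a) := Real.exp_pos _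
        apply div_le_div_of_nonneg_left hn.le (by positivity)
        nlinarith [mul_pos hn hE, mul_pos ha0 hEp]
      have e3 : r^i * (Real.exp ((i:ℝ)/a))^2 = 1 := by
        rw [hrdef, ← Real.exp_nat_mul, sq, ← Real.exp_add, ← Real.exp_add,
          ← Real.exp_zero]
        congr 1
        field_simp
        ring
      have e4 : r^i = ((Real.exp ((i:ℝ)/a))^2)⁻¹ := eq_inv_of_mul_eq_one_left e3
      have e2 : n / (n * Real.exp ((i:ℝ)/a))^2 = (1/n) * r ^ i := by
        rw [e4, mul_pow]
        field_simp
      rw [← e2]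
      exact h1
    have hrb : (1 - r)⁻¹ ≤ a * Real.exp 2 / 2 := by
      have hu : Real.exp (2/a) * r = 1 := by
        rw [hrdef, ← Real.exp_add]; simp
      have hu1 : 2/a + 1 ≤ Real.exp (2/a) := Real.add_one_le_exp _
      have hkey : (2/a) * r ≤ 1 - r := by
        nlinarith [mul_nonneg hrpos.le (by linarith : (0:ℝ) ≤ Real.exp (2/a) - 1 - 2/a)]
      have hr2 : Real.exp (-2) ≤ r := by
        rw [hrdef]
        apply Real.exp_le_exp.2
        have h2a : 2/a ≤ 2 := by
          rw [div_le_iff₀ ha0]; nlinarith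
        linarith
      have hlow : 2/(a * Real.exp 2) ≤ 1 - r := by
        have he2 : Real.exp (-2) = (Real.exp 2)⁻¹ := Real.exp_neg 2
        have : (2/a) * Real.exp (-2) ≤ (2/a) * r :=
          mul_le_mul_of_nonneg_left hr2 (by positivity)
        calc 2/(a * Real.exp 2) = (2/a) * Real.exp (-2) := by
              rw [he2]; field_simp
        _ ≤ (2/a) * r := this
        _ ≤ 1 - r := hkey
      have hpos2 : (0:ℝ) < 2/(a * Real.exp 2) := by positivity
      calc (1-r)⁻¹ ≤ (2/(a * Real.exp 2))⁻¹ := by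
            apply inv_anti₀ hpos2 hlow
      _ = a * Real.exp 2 / 2 := by field_simp
    have htail : ∑' i, f (i + N) ≤ Real.exp 2 * ((a/n) * L) := by
      have hsum1 : Summable (fun i => f (i + N)) := (summable_nat_add_iff N).2 hfs
      have hsum2 : Summable (fun i : ℕ => (1/n) * r ^ i) :=
        (summable_geometric_of_lt_one hr0 hr1).mul_left _
      calc ∑' i, f (i + N) ≤ ∑' i : ℕ, (1/n) * r ^ i :=
            Summable.tsum_le_tsum htailterm hsum1 hsum2
      _ = (1/n) * (1-r)⁻¹ := by
            rw [tsum_mul_left, tsum_geometric_of_lt_one hr0 hr1]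
      _ ≤ (1/n) * (a * Real.exp 2 / 2) := by gcongr
      _ = (Real.exp 2 / 2) * (a/n) * 1 := by ring
      _ ≤ Real.exp 2 * ((a/n) * L) := by
            have hep : (0:ℝ) < Real.exp 2 := Real.exp_pos 2
            have hdan : (0:ℝ) < a/n := div_pos ha0 hn
            nlinarith [mul_pos hep hdan]
    calc ∑' i, f i = ∑ i ∈ Finset.range N, f i + ∑' i, f (i + N) := hsplit.symm
    _ ≤ (a/n) * L + Real.exp 2 * ((a/n) * L) := add_le_add hhead htail
    _ = (1 + Real.exp 2) * (a/n) * L := by ring
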